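/- An R-module M is a flat Mittag-Leffler module if and only if for every R-module N and every x ∈ M ⊗_R N there exists a smallest pair (N', x') where N' is a submodule of N and x' ∈ M ⊗_R N' maps to x under M ⊗_R N' → M ⊗_R N; smallest meaning that for any other such pair (N'', x'') we have N' ⊆ N''. -/

import Mathlib

universe u

open TensorProduct

/-- `M` is a Mittag-Leffler module: for every family of `R`-modules `(Q i)`, the canonical map
`M ⊗ (∏ i, Q i) → ∏ i, (M ⊗ Q i)` is injective. -/
def IsMittagLeffler (R : Type u) [CommRing R]
    (M : Type u) [AddCommGroup M] [Module R M] : Prop :=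
  ∀ (ι : Type u) (Q : ι → Type u) [∀ i, AddCommGroup (Q i)] [∀ i, Module R (Q i)],
    Function.Injective (TensorProduct.piRightHom R R M Q)

section Aux

variable {R : Type u} [CommRing R] {M : Type u} [AddCommGroup M] [Module R M]

/-- `TensorProduct.map id f` is `lTensor`. -/
lemma map_id_eq_lTensor {N P : Type u} [AddCommGroup N] [Module R N]
    [AddCommGroup P] [Module R P] (f : N →ₗ[R] P) :
    TensorProduct.map (LinearMap.id : M →ₗ[R] M) f = LinearMap.lTensor M f := rfl

/-- Component formula for `piRightHom` composed with `lTensor` of a `pi` map. -/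
lemma piRightHom_lTensor_pi {N : Type u} [AddCommGroup N] [Module R N]
    {ι : Type u} {Q : ι → Type u} [∀ i, AddCommGroup (Q i)] [∀ i, Module R (Q i)]
    (f : ∀ i, N →ₗ[R] Q i) (x : M ⊗[R] N) (i : ι) :
    TensorProduct.piRightHom R R M Q (LinearMap.lTensor M (LinearMap.pi f) x) i
      = LinearMap.lTensor M (f i) x := by
  induction x using TensorProduct.induction_on with
  | zero => simp
  | tmul m n => simp [TensorProduct.piRightHom_tmul]
  | add a b ha hb => simp [ha, hb]

/-- Tensoring with a submodule contained in `⊥` gives only `0`. -/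
lemma map_id_subtype_eq_zero_of_le_bot {N : Type u} [AddCommGroup N] [Module R N]
    {N₀ : Submodule R N} (hbot : N₀ ≤ ⊥) (x₀ : M ⊗[R] N₀) :
    TensorProduct.map (LinearMap.id : M →ₗ[R] M) N₀.subtype x₀ = 0 := by
  haveI : Subsingleton N₀ := by
    refine ⟨fun a b => Subtype.ext ?_⟩
    have ha := hbot a.2
    have hb := hbot b.2
    rw [Submodule.mem_bot] at ha hb
    rw [ha, hb]
  rw [Subsingleton.elim x₀ 0, map_zero]

/-- The smallest-pair property implies `M ⊗ N' → M ⊗ N` is injective for all submodules. -/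
lemma lTensor_subtype_injective
    (h : ∀ (N : Type u) [AddCommGroup N] [Module R N] (x : M ⊗[R] N),
        ∃ (N' : Submodule R N) (x' : M ⊗[R] N'),
          TensorProduct.map (LinearMap.id : M →ₗ[R] M) N'.subtype x' = x ∧
          ∀ (N'' : Submodule R N) (x'' : M ⊗[R] N''),
            TensorProduct.map (LinearMap.id : M →ₗ[R] M) N''.subtype x'' = x →
            N' ≤ N'')
    (N : Type u) [AddCommGroup N] [Module R N] (P : Submodule R N) :
    Function.Injective (LinearMap.lTensor M P.subtype) := by
  rw [injective_iff_map_eq_zero]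
  intro y hy
  -- work inside N × P
  set ι2 : P →ₗ[R] N × P := LinearMap.inr R N P with hι2
  set g : P →ₗ[R] N × P := P.subtype.prod LinearMap.id with hg
  set x : M ⊗[R] (N × P) := LinearMap.lTensor M ι2 y with hx
  obtain ⟨N₀, x₀, hx₀, hsm⟩ := h (N × P) x
  -- pair 1 : range ι2
  have hA : N₀ ≤ LinearMap.range ι2 := by
    refine hsm _ (LinearMap.lTensor M ι2.rangeRestrict y) ?_
    rw [map_id_eq_lTensor, ← LinearMap.comp_apply, ← LinearMap.lTensor_comp,
      LinearMap.subtype_comp_codRestrict]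
  -- pair 2 : range g
  have hgx : LinearMap.lTensor M g y = x := by
    have hsum : g = (LinearMap.inl R N P).comp P.subtype + ι2 := by
      ext p <;> simp [hg, hι2]
    rw [hsum, LinearMap.lTensor_add, LinearMap.add_apply, LinearMap.lTensor_comp,
      LinearMap.comp_apply, hy, map_zero, zero_add, hx]
  have hC : N₀ ≤ LinearMap.range g := by
    refine hsm _ (LinearMap.lTensor M g.rangeRestrict y) ?_
    rw [map_id_eq_lTensor, ← LinearMap.comp_apply, ← LinearMap.lTensor_comp,
      LinearMap.subtype_comp_codRestrict]
    exact hgx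
  -- the two ranges intersect trivially
  have hbot : N₀ ≤ ⊥ := by
    intro z hz
    obtain ⟨p, hp⟩ := hA hz
    obtain ⟨q, hq⟩ := hC hz
    have h1 : (q : N) = 0 := by
      have := congrArg Prod.fst (hq.trans hp.symm)
      simpa [hg, hι2] using this
    have hq0 : q = 0 := Subtype.ext h1
    rw [Submodule.mem_bot, ← hq, hq0, map_zero]
  have hx0 : x = 0 := by
    rw [← hx₀, map_id_subtype_eq_zero_of_le_bot hbot]
  -- recover y from x via the projection
  have : y = LinearMap.lTensor M (LinearMap.snd R N P) x := by
    rw [hx, ← LinearMap.comp_apply, ← LinearMap.lTensor_comp, hι2,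
      LinearMap.snd_comp_inr, LinearMap.lTensor_id, LinearMap.id_apply]
  rw [this, hx0, map_zero]

end Aux

/-- `M` is a flat Mittag-Leffler module iff for every module `N` and every `x ∈ M ⊗ N` there is
a smallest pair `(N', x')` with `N' ⊆ N` a submodule and `x' ∈ M ⊗ N'` mapping to `x`. -/
theorem flat_mittagLeffler_iff_smallest_pair
    (R : Type u) [CommRing R]
    (M : Type u) [AddCommGroup M] [Module R M] :
    (Module.Flat R M ∧ IsMittagLeffler R M) ↔
      ∀ (N : Type u) [AddCommGroup N] [Module R N] (x : M ⊗[R] N),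
        ∃ (N' : Submodule R N) (x' : M ⊗[R] N'),
          TensorProduct.map (LinearMap.id : M →ₗ[R] M) N'.subtype x' = x ∧
          ∀ (N'' : Submodule R N) (x'' : M ⊗[R] N''),
            TensorProduct.map (LinearMap.id : M →ₗ[R] M) N''.subtype x'' = x →
            N' ≤ N'' := by
  constructor
  · rintro ⟨hflat, hml⟩ N _ _ x
    classical
    set S : Set (Submodule R N) := {P | ∃ y : M ⊗[R] P,
      TensorProduct.map (LinearMap.id : M →ₗ[R] M) P.subtype y = x} with hS
    set N₀ : Submodule R N := sInf S with hN₀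
    -- the pi map to quotients
    set φ : N →ₗ[R] ∀ P : S, N ⧸ (P : Submodule R N) :=
      LinearMap.pi (fun P : S => (P : Submodule R N).mkQ) with hφ
    have hker : LinearMap.ker φ = N₀ := by
      rw [hφ, LinearMap.ker_pi, hN₀, sInf_eq_iInf']
      simp [Submodule.ker_mkQ]
    have hexact : Function.Exact N₀.subtype φ := by
      rw [← hker]
      exact LinearMap.exact_subtype_ker_map φ
    have hflatexact := Module.Flat.lTensor_exact M hexact
    have hφx : LinearMap.lTensor M φ x = 0 := by
      apply hml S (fun P : S => N ⧸ (P : Submodule R N))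
      rw [map_zero]
      funext i
      rw [hφ, piRightHom_lTensor_pi]
      obtain ⟨y, hy⟩ := i.2
      rw [← hy, map_id_eq_lTensor, ← LinearMap.comp_apply, ← LinearMap.lTensor_comp]
      have : ((i : Submodule R N).mkQ).comp (i : Submodule R N).subtype = 0 := by
        ext p
        simp
      rw [this, LinearMap.lTensor_zero, LinearMap.zero_apply, Pi.zero_apply]
    obtain ⟨x', hx'⟩ := (hflatexact x).mp hφx
    exact ⟨N₀, x', by rw [map_id_eq_lTensor]; exact hx',
      fun P y hy => sInf_le ⟨y, hy⟩⟩
  · intro h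
    have hflat : Module.Flat R M :=
      (Module.Flat.iff_lTensor_injective').mpr
        (fun I => lTensor_subtype_injective h R I)
    refine ⟨hflat, ?_⟩
    intro ι Q _ _
    rw [injective_iff_map_eq_zero]
    intro z hz
    obtain ⟨N₀, x₀, hx₀, hsm⟩ := h (∀ i, Q i) z
    have hKle : ∀ i : ι, N₀ ≤ LinearMap.ker (LinearMap.proj (R := R) (φ := Q) i) := by
      intro i
      have hexact := Module.Flat.lTensor_exact M
        (LinearMap.exact_subtype_ker_map (LinearMap.proj (R := R) (φ := Q) i))
      have hzi : LinearMap.lTensor M (LinearMap.proj (R := R) (φ := Q) i) z = 0 := by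
        have hpi : LinearMap.pi (fun i => LinearMap.proj (R := R) (φ := Q) i)
            = LinearMap.id := by
          ext q j
          simp
        have := piRightHom_lTensor_pi (M := M)
          (fun i => LinearMap.proj (R := R) (φ := Q) i) z i
        rw [hpi, LinearMap.lTensor_id, LinearMap.id_apply] at this
        rw [← this, hz, Pi.zero_apply]
      obtain ⟨y, hy⟩ := (hexact z).mp hzi
      exact hsm _ y (by rw [map_id_eq_lTensor]; exact hy)
    have hbot : N₀ ≤ ⊥ := by
      intro w hw
      rw [Submodule.mem_bot]
      funext i
      have := hKle i hw
      rw [LinearMap.mem_ker] at this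
      exact this
    rw [← hx₀, map_id_subtype_eq_zero_of_le_bot hbot]
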